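/- Let 0 < α < 1 and 0 < p < 1/(1+α), and let M ∈ ℕ. Suppose that for all m > 2^M: ∫_{I_M} |σ_m^α a|^p dμ ≤ C, and |σ_m^α a(x)| ≤ C · 2^{M(1/p-1)} 2^{αl+k}/m^α for x ∈ I_M^{k,l} (0 ≤ k < l < M), and |σ_m^α a(x)| ≤ C · 2^{M(1/p-1)+k} for x ∈ I_M^{k,M} (0 ≤ k < M). Then ∑_{m=2^M+1}^∞ (∫_G |σ_m^α a|^p dμ) / m^{2-(1+α)p} ≤ c_{α,p} < ∞, where c_{α,p} depends only on α, p, and C. -/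

import Mathlib

open MeasureTheory

abbrev DyadicGroup : Type := ℕ → ZMod 2

instance : MeasurableSpace (ZMod 2) := ⊤

noncomputable section

/-- Rademacher function. -/
def rade (k : ℕ) (x : DyadicGroup) : ℝ := (-1 : ℝ) ^ (x k).val

/-- Walsh function. -/
def walsh (n : ℕ) (x : DyadicGroup) : ℝ :=
  ∏ k ∈ Finset.range n, if n.testBit k then rade k x else 1

/-- Walsh–Dirichlet kernel. -/
def dirichletKer (n : ℕ) (x : DyadicGroup) : ℝ := ∑ k ∈ Finset.range n, walsh k x

/-- Cesàro numbers `A_n^α`. -/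
def cesaroA (α : ℝ) (n : ℕ) : ℝ := (∏ i ∈ Finset.range n, (α + (i + 1))) / (n.factorial : ℝ)

/-- Walsh–Fourier coefficient. -/
def fourierCoef (μ : Measure DyadicGroup) (f : DyadicGroup → ℝ) (k : ℕ) : ℝ :=
  ∫ x, f x * walsh k x ∂μ

/-- Walsh–Fourier partial sum. -/
def partialSum (μ : Measure DyadicGroup) (f : DyadicGroup → ℝ) (n : ℕ) (x : DyadicGroup) : ℝ :=
  ∑ k ∈ Finset.range n, fourierCoef μ f k * walsh k x

/-- `(C,α)` Cesàro mean of Walsh–Fourier series. -/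
def cesaroMean (μ : Measure DyadicGroup) (α : ℝ) (n : ℕ) (f : DyadicGroup → ℝ)
    (x : DyadicGroup) : ℝ :=
  (cesaroA α n)⁻¹ * ∑ k ∈ Finset.Icc 1 n, cesaroA (α - 1) (n - k) * partialSum μ f k x

/-- The cylinder `I_M`. -/
def IM (M : ℕ) : Set DyadicGroup := {x | ∀ i < M, x i = 0}

/-- `μ` is the Haar probability measure on the dyadic group: every cylinder of length `n`
has measure `2⁻ⁿ`. -/
def IsDyadicHaar (μ : Measure DyadicGroup) : Prop :=
  ∀ (n : ℕ) (x : DyadicGroup), μ {y | ∀ i < n, y i = x i} = (2 : ENNReal)⁻¹ ^ n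

end


/-- The set `I_M^{k,l}` for `k < l < M`. -/
def IklSet (k l : ℕ) : Set DyadicGroup :=
  {x | (∀ i < k, x i = 0) ∧ x k = 1 ∧ (∀ i, k < i → i < l → x i = 0) ∧ x l = 1}

/-- The set `I_M^{k,M}` for `k < M`. -/
def IkMSet (M k : ℕ) : Set DyadicGroup :=
  {x | (∀ i < k, x i = 0) ∧ x k = 1 ∧ ∀ i, k < i → i < M → x i = 0}

-- ============ rpow helpers ============

lemma two_rpow_mul (u v : ℝ) : (2:ℝ) ^ u * (2:ℝ) ^ v = (2:ℝ) ^ (u + v) :=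
  (Real.rpow_add two_pos u v).symm

lemma two_rpow_rpow (u v : ℝ) : ((2:ℝ) ^ u) ^ v = (2:ℝ) ^ (u * v) :=
  (Real.rpow_mul (by norm_num) u v).symm

lemma two_rpow_pow (u : ℝ) (n : ℕ) : ((2:ℝ) ^ u) ^ n = (2:ℝ) ^ (u * n) := by
  rw [← Real.rpow_natCast ((2:ℝ) ^ u) n, two_rpow_rpow]

lemma inv_two_pow_eq (n : ℕ) : ((2:ℝ)⁻¹) ^ n = (2:ℝ) ^ (-(n:ℝ)) := by
  rw [inv_pow, ← Real.rpow_natCast 2 n, ← Real.rpow_neg (by norm_num)]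

lemma half_eq_two_rpow : (1/2 : ℝ) = (2:ℝ) ^ (-1 : ℝ) := by
  rw [Real.rpow_neg_one]; norm_num

-- ============ per-piece exponent computations ============

lemma branch1_eq {α p C : ℝ} (hp0 : 0 < p) (hC : 0 ≤ C) (M l k m : ℕ) (hm : 0 < m) :
    ((2:ℝ)⁻¹) ^ (l+1) * (C * (2:ℝ) ^ ((M:ℝ) * (1/p - 1)) * (2:ℝ) ^ (α*l + k) / (m:ℝ) ^ α) ^ p
      = C ^ p * ((2:ℝ) ^ ((M:ℝ) * (1 - p)) * (m:ℝ) ^ (-(α*p))) * (1/2)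
          * ((2:ℝ) ^ (α*p - 1)) ^ l * ((2:ℝ) ^ p) ^ k := by
  have hm0 : (0:ℝ) < (m:ℝ) := by exact_mod_cast hm
  have hp' : p ≠ 0 := ne_of_gt hp0
  rw [Real.div_rpow (by positivity) (by positivity)]
  rw [Real.mul_rpow (by positivity) (by positivity), Real.mul_rpow hC (by positivity)]
  rw [two_rpow_rpow, two_rpow_rpow, ← Real.rpow_mul hm0.le]
  rw [div_eq_mul_inv, ← Real.rpow_neg hm0.le]
  rw [inv_two_pow_eq, two_rpow_pow, two_rpow_pow, half_eq_two_rpow]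
  have collect3 : ∀ (cp mz a b c : ℝ),
      (2:ℝ)^a * (cp * (2:ℝ)^b * (2:ℝ)^c * mz) = cp * mz * (2:ℝ)^(a+b+c) := by
    intros cp mz a b c; rw [← two_rpow_mul, ← two_rpow_mul]; ring
  have collect4 : ∀ (cp mz b e f g : ℝ),
      cp * ((2:ℝ)^b * mz) * (2:ℝ)^e * (2:ℝ)^f * (2:ℝ)^g = cp * mz * (2:ℝ)^(b+e+f+g) := by
    intros cp mz b e f g; rw [← two_rpow_mul, ← two_rpow_mul, ← two_rpow_mul]; ring
  rw [collect3, collect4]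
  congr 1
  push_cast
  field_simp
  ring

lemma branch2_eq {p C : ℝ} (hp0 : 0 < p) (hC : 0 ≤ C) (M k : ℕ) :
    ((2:ℝ)⁻¹) ^ M * (C * (2:ℝ) ^ ((M:ℝ) * (1/p - 1) + k)) ^ p
      = C ^ p * ((2:ℝ) ^ (-p)) ^ M * ((2:ℝ) ^ p) ^ k := by
  have hp' : p ≠ 0 := ne_of_gt hp0
  rw [Real.mul_rpow hC (by positivity), two_rpow_rpow, inv_two_pow_eq,
    two_rpow_pow, two_rpow_pow]
  have c2l : ∀ (cp a b : ℝ), (2:ℝ)^a * (cp * (2:ℝ)^b) = cp * (2:ℝ)^(a+b) := by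
    intros cp a b; rw [← two_rpow_mul]; ring
  have c2r : ∀ (cp e f : ℝ), cp * (2:ℝ)^e * (2:ℝ)^f = cp * (2:ℝ)^(e+f) := by
    intros cp e f; rw [← two_rpow_mul]; ring
  rw [c2l, c2r]
  congr 1
  field_simp
  ring


lemma measurable_rade (k : ℕ) : Measurable (rade k) := by
  have : rade k = (fun v : ZMod 2 => (-1 : ℝ) ^ v.val) ∘ (fun x : DyadicGroup => x k) := rfl
  rw [this]
  exact measurable_from_top.comp (measurable_pi_apply k)

lemma measurable_walsh (n : ℕ) : Measurable (walsh n) := by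
  unfold walsh
  exact Finset.measurable_prod _ fun k _ => by
    by_cases h : n.testBit k <;> simp [h, measurable_rade, measurable_const]

lemma measurable_cesaroMean (μ : Measure DyadicGroup) (α : ℝ) (m : ℕ) (a : DyadicGroup → ℝ) :
    Measurable (cesaroMean μ α m a) := by
  unfold cesaroMean partialSum
  exact (Finset.measurable_sum _ fun k _ =>
    ((Finset.measurable_sum _ fun j _ => (measurable_walsh j).const_mul _).const_mul _)).const_mul _

lemma abs_walsh_le_one (n : ℕ) (x : DyadicGroup) : |walsh n x| ≤ 1 := by
  unfold walsh
  rw [Finset.abs_prod]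
  apply Finset.prod_le_one (fun k _ => abs_nonneg _)
  intro k _
  by_cases h : n.testBit k <;> simp [h, rade]

noncomputable def cmBound (μ : Measure DyadicGroup) (α : ℝ) (m : ℕ) (a : DyadicGroup → ℝ) : ℝ :=
  |(cesaroA α m)⁻¹| * ∑ k ∈ Finset.Icc 1 m,
    |cesaroA (α - 1) (m - k)| * ∑ j ∈ Finset.range k, |fourierCoef μ a j|

lemma abs_cesaroMean_le (μ : Measure DyadicGroup) (α : ℝ) (m : ℕ) (a : DyadicGroup → ℝ)
    (x : DyadicGroup) : |cesaroMean μ α m a x| ≤ cmBound μ α m a := by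
  unfold cesaroMean cmBound
  rw [abs_mul]
  apply mul_le_mul_of_nonneg_left _ (abs_nonneg _)
  refine (Finset.abs_sum_le_sum_abs _ _).trans (Finset.sum_le_sum fun k _ => ?_)
  rw [abs_mul]
  apply mul_le_mul_of_nonneg_left _ (abs_nonneg _)
  unfold partialSum
  refine (Finset.abs_sum_le_sum_abs _ _).trans (Finset.sum_le_sum fun j _ => ?_)
  rw [abs_mul]
  calc |fourierCoef μ a j| * |walsh j x| ≤ |fourierCoef μ a j| * 1 :=
        mul_le_mul_of_nonneg_left (abs_walsh_le_one j x) (abs_nonneg _)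
    _ = |fourierCoef μ a j| := mul_one _

lemma integrable_abs_rpow (μ : Measure DyadicGroup) [IsFiniteMeasure μ] (α p : ℝ) (hp : 0 < p)
    (m : ℕ) (a : DyadicGroup → ℝ) :
    Integrable (fun x => |cesaroMean μ α m a x| ^ p) μ := by
  apply (integrable_const ((cmBound μ α m a) ^ p)).mono'
    ((Real.continuous_rpow_const hp.le).measurable.comp
      (measurable_cesaroMean μ α m a).abs).aestronglyMeasurable
  filter_upwards with x
  simp only [Function.comp_apply, Real.norm_eq_abs,
    abs_of_nonneg (Real.rpow_nonneg (abs_nonneg _) _)]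
  exact Real.rpow_le_rpow (abs_nonneg _) (abs_cesaroMean_le μ α m a x) hp.le


lemma zmod2_eq_one {v : ZMod 2} (h : v ≠ 0) : v = 1 := by revert h; revert v; decide
lemma zmod2_eq_zero {v : ZMod 2} (h : v ≠ 1) : v = 0 := by revert h; revert v; decide

lemma measurableSet_cylinder (n : ℕ) (z : DyadicGroup) :
    MeasurableSet {y : DyadicGroup | ∀ i < n, y i = z i} := by
  have : {y : DyadicGroup | ∀ i < n, y i = z i}
      = ⋂ i ∈ Finset.range n, {y : DyadicGroup | y i = z i} := by
    ext y; simp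
  rw [this]
  refine Finset.measurableSet_biInter _ fun i _ => ?_
  have : {y : DyadicGroup | y i = z i} = (fun y : DyadicGroup => y i) ⁻¹' {z i} := rfl
  rw [this]
  exact measurable_pi_apply i (MeasurableSpace.measurableSet_top)

lemma measurableSet_IM (M : ℕ) : MeasurableSet (IM M) := by
  have : IM M = {y : DyadicGroup | ∀ i < M, y i = (fun _ => 0) i} := rfl
  rw [this]; exact measurableSet_cylinder M _

lemma Ikl_eq_cylinder (k l : ℕ) (hkl : k < l) :
    IklSet k l = {y : DyadicGroup |
      ∀ i < l + 1, y i = (fun i => if i = k ∨ i = l then (1 : ZMod 2) else 0) i} := by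
  ext y
  simp only [IklSet, Set.mem_setOf_eq]
  constructor
  · rintro ⟨h1, h2, h3, h4⟩ i hi
    by_cases hik : i = k
    · subst hik; simpa using h2
    · by_cases hil : i = l
      · subst hil; simpa using h4
      · simp only [if_neg (by tauto : ¬(i = k ∨ i = l))]
        rcases lt_or_gt_of_ne hik with h | h
        · exact h1 i h
        · exact h3 i h (by omega)
  · intro h
    refine ⟨fun i hi => ?_, ?_, fun i h1 h2 => ?_, ?_⟩
    · have := h i (by omega); rwa [if_neg (by omega)] at this
    · have := h k (by omega); rwa [if_pos (by omega)] at this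
    · have := h i (by omega); rwa [if_neg (by omega)] at this
    · have := h l (by omega); rwa [if_pos (by omega)] at this

lemma IkM_eq_cylinder (M k : ℕ) (hk : k < M) :
    IkMSet M k = {y : DyadicGroup |
      ∀ i < M, y i = (fun i => if i = k then (1 : ZMod 2) else 0) i} := by
  ext y
  simp only [IkMSet, Set.mem_setOf_eq]
  constructor
  · rintro ⟨h1, h2, h3⟩ i hi
    by_cases hik : i = k
    · subst hik; simpa using h2
    · simp only [if_neg hik]
      rcases lt_or_gt_of_ne hik with h | h
      · exact h1 i h
      · exact h3 i h hi
  · intro h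
    refine ⟨fun i hi => ?_, ?_, fun i h1 h2 => ?_⟩
    · have := h i (by omega); rwa [if_neg (by omega)] at this
    · have := h k hk; rwa [if_pos rfl] at this
    · have := h i h2; rwa [if_neg (by omega)] at this

lemma measure_Ikl {μ : Measure DyadicGroup} (hμ : IsDyadicHaar μ) {k l : ℕ} (hkl : k < l) :
    μ (IklSet k l) = (2 : ENNReal)⁻¹ ^ (l + 1) := by
  rw [Ikl_eq_cylinder k l hkl]; exact hμ (l + 1) _

lemma measure_IkM {μ : Measure DyadicGroup} (hμ : IsDyadicHaar μ) {M k : ℕ} (hk : k < M) :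
    μ (IkMSet M k) = (2 : ENNReal)⁻¹ ^ M := by
  rw [IkM_eq_cylinder M k hk]; exact hμ M _

/-- index set for the partition of the complement of `I_M`. -/
def idxS (M : ℕ) : Finset ((_ : ℕ) × ℕ) :=
  (Finset.range (M + 1)).sigma fun l => Finset.range (min l M)

/-- piece of the partition. -/
def piece (M : ℕ) (q : (_ : ℕ) × ℕ) : Set DyadicGroup :=
  if q.1 < M then IklSet q.2 q.1 else IkMSet M q.2

lemma mem_idxS {M : ℕ} {q : (_ : ℕ) × ℕ} :
    q ∈ idxS M ↔ q.1 ≤ M ∧ q.2 < q.1 ∧ q.2 < M := by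
  rcases q with ⟨l, k⟩
  simp [idxS, Nat.lt_succ_iff, lt_min_iff]

lemma piece_basic {M : ℕ} {q : (_ : ℕ) × ℕ} {x : DyadicGroup}
    (hx : x ∈ piece M q) : (∀ i < q.2, x i = 0) ∧ x q.2 = 1 := by
  unfold piece at hx
  split at hx
  · exact ⟨hx.1, hx.2.1⟩
  · exact ⟨hx.1, hx.2.1⟩

lemma measurableSet_piece {M : ℕ} {q : (_ : ℕ) × ℕ} (hq : q ∈ idxS M) :
    MeasurableSet (piece M q) := by
  rw [mem_idxS] at hq
  unfold piece
  by_cases h : q.1 < M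
  · rw [if_pos h, Ikl_eq_cylinder _ _ hq.2.1]; exact measurableSet_cylinder _ _
  · rw [if_neg h, IkM_eq_cylinder _ _ hq.2.2]; exact measurableSet_cylinder _ _

lemma compl_IM_eq (M : ℕ) : (IM M)ᶜ = ⋃ q ∈ idxS M, piece M q := by
  classical
  ext x
  simp only [Set.mem_compl_iff, IM, Set.mem_setOf_eq, Set.mem_iUnion, exists_prop]
  constructor
  · intro hx
    push_neg at hx
    obtain ⟨i, hi, hxi⟩ := hx
    have hex : ∃ j, j < M ∧ x j = 1 := ⟨i, hi, zmod2_eq_one hxi⟩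
    set k := Nat.find hex with hkdef
    obtain ⟨hkM, hxk⟩ := Nat.find_spec hex
    have hmin : ∀ j < k, x j = 0 := by
      intro j hj
      have := Nat.find_min hex hj
      push_neg at this
      exact zmod2_eq_zero (this (by omega))
    by_cases hQ : ∃ l, k < l ∧ l < M ∧ x l = 1
    · set l := Nat.find hQ with hldef
      obtain ⟨hkl, hlM, hxl⟩ := Nat.find_spec hQ
      refine ⟨⟨l, k⟩, ?_, ?_⟩
      · rw [mem_idxS]
        show l ≤ M ∧ k < l ∧ k < M
        omega
      · show x ∈ piece M ⟨l, k⟩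
        simp only [piece]
        rw [if_pos hlM]
        refine ⟨hmin, hxk, fun i h1 h2 => ?_, hxl⟩
        have := Nat.find_min hQ h2
        push_neg at this
        exact zmod2_eq_zero (this h1 (by omega))
    · push_neg at hQ
      refine ⟨⟨M, k⟩, ?_, ?_⟩
      · rw [mem_idxS]
        show M ≤ M ∧ k < M ∧ k < M
        omega
      · show x ∈ piece M ⟨M, k⟩
        simp only [piece]
        rw [if_neg (lt_irrefl M)]
        exact ⟨hmin, hxk, fun i h1 h2 => zmod2_eq_zero (hQ i h1 h2)⟩
  · rintro ⟨q, hq, hx⟩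
    rw [mem_idxS] at hq
    have hb := piece_basic hx
    intro hall
    have h0 := hall q.2 hq.2.2
    rw [hb.2] at h0
    exact one_ne_zero h0

lemma pieces_disjoint (M : ℕ) :
    Set.Pairwise ↑(idxS M) (Function.onFun Disjoint (piece M)) := by
  intro q hq q' hq' hne
  rw [Finset.mem_coe, mem_idxS] at hq hq'
  rw [Function.onFun]
  rw [Set.disjoint_left]
  intro x hx hx'
  -- least index with value 1 agrees
  have hb := piece_basic hx
  have hb' := piece_basic hx'
  have hkk : q.2 = q'.2 := by
    by_contra hne2
    rcases lt_or_gt_of_ne hne2 with h | h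
    · have := hb'.1 q.2 h; rw [hb.2] at this; exact one_ne_zero this
    · have := hb.1 q'.2 h; rw [hb'.2] at this; exact one_ne_zero this
  -- helper : if l < l' then contradiction
  have key : ∀ (l l' k : ℕ), l ≤ M → l' ≤ M → k < l → l < l' →
      x ∈ piece M ⟨l, k⟩ → x ∈ piece M ⟨l', k⟩ → False := by
    intro l l' k hlM hl'M hkl hll' hx1 hx2
    have hlM' : l < M := by omega
    simp only [piece] at hx1 hx2
    rw [if_pos hlM'] at hx1
    have hxl : x l = 1 := hx1.2.2.2
    by_cases h : l' < M
    · rw [if_pos h] at hx2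
      have := hx2.2.2.1 l hkl hll'
      rw [hxl] at this; exact one_ne_zero this
    · rw [if_neg h] at hx2
      have := hx2.2.2 l hkl hlM'
      rw [hxl] at this; exact one_ne_zero this
  have hll : q.1 ≠ q'.1 := by
    intro h
    apply hne
    rcases q with ⟨l, k⟩; rcases q' with ⟨l', k'⟩
    simp only at h hkk
    subst h; subst hkk; rfl
  rcases lt_or_gt_of_ne hll with h | h
  · exact key q.1 q'.1 q.2 hq.1 hq'.1 hq.2.1 h (by rcases q with ⟨l,k⟩; exact hx)
      (by rcases q' with ⟨l',k'⟩; rw [hkk]; exact hx')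
  · exact key q'.1 q.1 q'.2 hq'.1 hq.1 hq'.2.1 h (by rcases q' with ⟨l',k'⟩; exact hx')
      (by rcases q with ⟨l,k⟩; rw [← hkk]; exact hx)


lemma tail_step {s b : ℝ} (hs : 0 < s) (hb : 2 ≤ b) :
    s * b ^ (-(s + 1)) ≤ (b - 1) ^ (-s) - b ^ (-s) := by
  have hb0 : (0:ℝ) < b := by linarith
  have ha0 : (0:ℝ) < b - 1 := by linarith
  set a := b - 1 with hadef
  set t := 1 / a with htdef
  have ht0 : 0 < t := by positivity
  have h1t : (0:ℝ) < 1 + t := by linarith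
  have hat : a * (1 + t) = b := by
    rw [htdef, mul_add, mul_one, mul_one_div, div_self (ne_of_gt ha0), hadef]; ring
  have hbern : 1 + (1 + s) * t ≤ (1 + t) ^ (1 + s) :=
    one_add_mul_self_le_rpow_one_add (by linarith) (by linarith)
  set X := (1 + t) ^ s with hXdef
  have hX1 : (1 + t) ^ (1 + s) = (1 + t) * X := by
    rw [Real.rpow_add h1t, Real.rpow_one]
  rw [hX1] at hbern
  have hkey : t / (1 + t) = 1 / b := by
    have hne : b - 1 ≠ 0 := by linarith
    have hbne : b ≠ 0 := by linarith
    rw [htdef, hadef]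
    have hpos : (1 + 1/(b-1)) ≠ 0 := by positivity
    rw [div_eq_div_iff hpos hbne]
    field_simp
    ring
  have hXge : s / b ≤ X - 1 := by
    have h1 : (1 + (1 + s) * t) / (1 + t) ≤ X := by
      rw [div_le_iff₀ h1t]; linarith
    have h2 : (1 + (1 + s) * t) / (1 + t) - 1 = s * (t / (1 + t)) := by
      field_simp
      ring
    calc s / b = s * (t / (1 + t)) := by rw [hkey]; ring
      _ = (1 + (1 + s) * t) / (1 + t) - 1 := h2.symm
      _ ≤ X - 1 := by linarith
  have hI : a ^ (-s) = b ^ (-s) * X := by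
    have h3 : b ^ (-s) * X = (a * (1 + t)) ^ (-s) * (1 + t) ^ s := by rw [hat]
    rw [h3, Real.mul_rpow ha0.le h1t.le, mul_assoc, ← Real.rpow_add h1t]
    simp
  have hII : b ^ (-(s + 1)) = b ^ (-s) / b := by
    rw [show -(s + 1) = -s + (-1) by ring, Real.rpow_add hb0, Real.rpow_neg_one]
    ring
  have hY : 0 < b ^ (-s) := Real.rpow_pos_of_pos hb0 _
  rw [hI, hII]
  have h2 := mul_le_mul_of_nonneg_left hXge hY.le
  calc s * (b ^ (-s) / b) = b ^ (-s) * (s / b) := by ring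
    _ ≤ b ^ (-s) * (X - 1) := h2
    _ = b ^ (-s) * X - b ^ (-s) := by ring

lemma telescope_Ioc (g : ℕ → ℝ) (N K : ℕ) (hNK : N ≤ K) :
    ∑ m ∈ Finset.Ioc N K, (g (m - 1) - g m) = g N - g K := by
  induction K, hNK using Nat.le_induction with
  | base => simp
  | succ K hNK ih =>
      rw [Finset.sum_Ioc_succ_top hNK, ih, Nat.add_sub_cancel]; ring

lemma tail_sum {r : ℝ} (hr : 1 < r) {N : ℕ} (hN : 1 ≤ N) (s : Finset ℕ)
    (hs : ∀ m ∈ s, N < m) :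
    ∑ m ∈ s, (m : ℝ) ^ (-r) ≤ (N : ℝ) ^ (1 - r) / (r - 1) := by
  have hr1 : 0 < r - 1 := by linarith
  have hN0 : (0:ℝ) < N := by exact_mod_cast hN
  have hRHS : 0 ≤ (N : ℝ) ^ (1 - r) / (r - 1) := by positivity
  rcases s.eq_empty_or_nonempty with rfl | hne
  · simpa using hRHS
  set K := s.sup id with hK
  have hNK : N ≤ K := by
    obtain ⟨m, hm⟩ := hne
    exact le_trans (hs m hm).le (Finset.le_sup (f := id) hm)
  have hsub : s ⊆ Finset.Ioc N K := fun m hm =>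
    Finset.mem_Ioc.mpr ⟨hs m hm, Finset.le_sup (f := id) hm⟩
  set g : ℕ → ℝ := fun n => (n : ℝ) ^ (1 - r) with hg
  have step : ∀ m ∈ Finset.Ioc N K, (m : ℝ) ^ (-r) ≤ (g (m - 1) - g m) / (r - 1) := by
    intro m hm
    rw [Finset.mem_Ioc] at hm
    have hm2 : 2 ≤ (m : ℝ) := by
      have h2 : 2 ≤ m := by omega
      exact_mod_cast h2
    have hts := tail_step hr1 hm2
    rw [le_div_iff₀ hr1]
    have hcast : ((m - 1 : ℕ) : ℝ) = (m : ℝ) - 1 := by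
      have h1 : 1 ≤ m := by omega
      push_cast [h1]; ring
    simp only [hg, hcast]
    calc (m:ℝ) ^ (-r) * (r - 1) = (r - 1) * (m : ℝ) ^ (-(r - 1 + 1)) := by
          rw [show -(r - 1 + 1) = -r by ring]; ring
      _ ≤ ((m:ℝ) - 1) ^ (-(r - 1)) - (m:ℝ) ^ (-(r - 1)) := hts
      _ = ((m:ℝ) - 1) ^ (1 - r) - (m:ℝ) ^ (1 - r) := by rw [show -(r-1) = 1 - r by ring]
  calc ∑ m ∈ s, (m : ℝ) ^ (-r)
      ≤ ∑ m ∈ Finset.Ioc N K, (m : ℝ) ^ (-r) :=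
        Finset.sum_le_sum_of_subset_of_nonneg hsub
          (fun m _ _ => Real.rpow_nonneg (Nat.cast_nonneg m) _)
    _ ≤ ∑ m ∈ Finset.Ioc N K, (g (m - 1) - g m) / (r - 1) := Finset.sum_le_sum step
    _ = (g N - g K) / (r - 1) := by rw [← Finset.sum_div, telescope_Ioc g N K hNK]
    _ ≤ g N / (r - 1) := by
        have h0 : 0 ≤ g K := Real.rpow_nonneg (Nat.cast_nonneg K) _
        gcongr
        linarith
    _ = (N : ℝ) ^ (1 - r) / (r - 1) := rfl

lemma geom_le_of_one_lt {r : ℝ} (hr : 1 < r) (n : ℕ) :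
    ∑ k ∈ Finset.range n, r ^ k ≤ r ^ n / (r - 1) := by
  have h1 : (0:ℝ) < r - 1 := by linarith
  rw [geom_sum_eq (by linarith : r ≠ 1)]
  gcongr
  linarith

lemma geom_le_of_lt_one {ρ : ℝ} (h0 : 0 ≤ ρ) (h1 : ρ < 1) (n : ℕ) :
    ∑ l ∈ Finset.range n, ρ ^ l ≤ 1 / (1 - ρ) := by
  rw [geom_sum_eq (ne_of_lt h1)]
  have h2 : (ρ ^ n - 1) / (ρ - 1) = (1 - ρ ^ n) / (1 - ρ) := by
    rw [← neg_div_neg_eq]; ring_nf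
  rw [h2]
  have h3 := pow_nonneg h0 n
  have h4 : (0:ℝ) < 1 - ρ := by linarith
  gcongr
  linarith

-- ============ key integral bound ============

open MeasureTheory in
lemma key_integral_bound (α p : ℝ) (hα0 : 0 < α) (hp0 : 0 < p) (hap : (1 + α) * p < 1)
    (μ : Measure DyadicGroup) (hμ : IsDyadicHaar μ) (C : ℝ) (hC : 0 ≤ C)
    (M : ℕ) (a : DyadicGroup → ℝ) (m : ℕ) (hm : 2 ^ M < m)
    (h1 : ∫ x in IM M, |cesaroMean μ α m a x| ^ p ∂μ ≤ C)
    (h2 : ∀ k l : ℕ, k < l → l < M → ∀ x ∈ IklSet k l,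
        |cesaroMean μ α m a x| ≤
          C * (2 : ℝ) ^ ((M : ℝ) * (1 / p - 1)) * (2 : ℝ) ^ (α * l + k) / (m : ℝ) ^ α)
    (h3 : ∀ k : ℕ, k < M → ∀ x ∈ IkMSet M k,
        |cesaroMean μ α m a x| ≤ C * (2 : ℝ) ^ ((M : ℝ) * (1 / p - 1) + k)) :
    ∫ x, |cesaroMean μ α m a x| ^ p ∂μ ≤
      C + C ^ p / ((2:ℝ) ^ p - 1)
        + (1 / (2 * ((2:ℝ) ^ p - 1) * (1 - (2:ℝ) ^ ((1 + α) * p - 1))))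
          * (C ^ p * (2:ℝ) ^ ((M : ℝ) * (1 - p)) * (m : ℝ) ^ (-(α * p))) := by
  classical
  have hprob : IsProbabilityMeasure μ := ⟨by simpa using hμ 0 (fun _ => 0)⟩
  have hInt : Integrable (fun x => |cesaroMean μ α m a x| ^ p) μ :=
    integrable_abs_rpow μ α p hp0 m a
  have hm0 : 0 < m := lt_of_le_of_lt (Nat.zero_le _) hm
  have hm0' : (0:ℝ) < (m:ℝ) := by exact_mod_cast hm0
  have hCp : (0:ℝ) ≤ C ^ p := Real.rpow_nonneg hC p
  have hR : (1:ℝ) < (2:ℝ) ^ p :=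
    (Real.one_lt_rpow_iff_of_pos two_pos).mpr (Or.inl ⟨one_lt_two, hp0⟩)
  have hρ0 : (0:ℝ) ≤ (2:ℝ) ^ ((1 + α) * p - 1) := Real.rpow_nonneg (by norm_num) _
  have hρ1 : (2:ℝ) ^ ((1 + α) * p - 1) < 1 :=
    Real.rpow_lt_one_of_one_lt_of_neg one_lt_two (by linarith)
  have hE0 : (0:ℝ) ≤ (2:ℝ) ^ ((M:ℝ) * (1 - p)) * (m:ℝ) ^ (-(α * p)) := by positivity
  -- split the integral
  have hsplit : ∫ x, |cesaroMean μ α m a x| ^ p ∂μ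
      = (∫ x in IM M, |cesaroMean μ α m a x| ^ p ∂μ)
        + ∫ x in (IM M)ᶜ, |cesaroMean μ α m a x| ^ p ∂μ :=
    (integral_add_compl (measurableSet_IM M) hInt).symm
  have hcompl : ∫ x in (IM M)ᶜ, |cesaroMean μ α m a x| ^ p ∂μ
      = ∑ q ∈ idxS M, ∫ x in piece M q, |cesaroMean μ α m a x| ^ p ∂μ := by
    rw [compl_IM_eq M]
    exact integral_biUnion_finset (idxS M) (fun q hq => measurableSet_piece hq)
      (pieces_disjoint M) (fun q hq => hInt.integrableOn)
  -- the bound function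
  set bnd : (_ : ℕ) × ℕ → ℝ := fun q =>
    if q.1 < M then
      C ^ p * ((2:ℝ) ^ ((M:ℝ) * (1 - p)) * (m:ℝ) ^ (-(α*p))) * (1/2)
        * ((2:ℝ) ^ (α*p - 1)) ^ q.1 * ((2:ℝ) ^ p) ^ q.2
    else C ^ p * ((2:ℝ) ^ (-p)) ^ M * ((2:ℝ) ^ p) ^ q.2 with hbnd
  -- per piece bound
  have hpiece : ∀ q ∈ idxS M, ∫ x in piece M q, |cesaroMean μ α m a x| ^ p ∂μ ≤ bnd q := by
    rintro ⟨l, k⟩ hq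
    rw [mem_idxS] at hq
    obtain ⟨hlM, hkl, hkM⟩ : l ≤ M ∧ k < l ∧ k < M := hq
    by_cases hl : l < M
    · have hpeq : piece M ⟨l, k⟩ = IklSet k l := by simp [piece, hl]
      have hbeq : bnd ⟨l, k⟩ = C ^ p * ((2:ℝ) ^ ((M:ℝ) * (1 - p)) * (m:ℝ) ^ (-(α*p))) * (1/2)
          * ((2:ℝ) ^ (α*p - 1)) ^ l * ((2:ℝ) ^ p) ^ k := by simp [hbnd, hl]
      rw [hpeq, hbeq]
      have hms : MeasurableSet (IklSet k l) := by
        rw [Ikl_eq_cylinder k l hkl]; exact measurableSet_cylinder _ _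
      set B := C * (2:ℝ) ^ ((M:ℝ) * (1/p - 1)) * (2:ℝ) ^ (α*l + k) / (m:ℝ) ^ α with hB
      calc ∫ x in IklSet k l, |cesaroMean μ α m a x| ^ p ∂μ
          ≤ ∫ _x in IklSet k l, B ^ p ∂μ := by
            apply setIntegral_mono_on hInt.integrableOn ((integrableOn_const_iff enorm_ne_top).mpr
              (Or.inr (measure_lt_top μ _))) hms
            intro x hx
            exact Real.rpow_le_rpow (abs_nonneg _) (h2 k l hkl hl x hx) hp0.le
        _ = ((μ (IklSet k l)).toReal) * B ^ p := by rw [setIntegral_const, smul_eq_mul]; rfl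
        _ = ((2:ℝ)⁻¹) ^ (l+1) * B ^ p := by
            rw [measure_Ikl hμ hkl]
            simp [ENNReal.toReal_pow]
        _ = _ := branch1_eq hp0 hC M l k m hm0
    · have hpeq : piece M ⟨l, k⟩ = IkMSet M k := by simp [piece, hl]
      have hbeq : bnd ⟨l, k⟩ = C ^ p * ((2:ℝ) ^ (-p)) ^ M * ((2:ℝ) ^ p) ^ k := by
        simp [hbnd, hl]
      rw [hpeq, hbeq]
      have hms : MeasurableSet (IkMSet M k) := by
        rw [IkM_eq_cylinder M k hkM]; exact measurableSet_cylinder _ _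
      calc ∫ x in IkMSet M k, |cesaroMean μ α m a x| ^ p ∂μ
          ≤ ∫ _x in IkMSet M k, (C * (2:ℝ) ^ ((M:ℝ) * (1/p - 1) + k)) ^ p ∂μ := by
            apply setIntegral_mono_on hInt.integrableOn ((integrableOn_const_iff enorm_ne_top).mpr
              (Or.inr (measure_lt_top μ _))) hms
            intro x hx
            exact Real.rpow_le_rpow (abs_nonneg _) (h3 k hkM x hx) hp0.le
        _ = ((μ (IkMSet M k)).toReal) * (C * (2:ℝ) ^ ((M:ℝ) * (1/p - 1) + k)) ^ p := by
            rw [setIntegral_const, smul_eq_mul]; rfl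
        _ = ((2:ℝ)⁻¹) ^ M * (C * (2:ℝ) ^ ((M:ℝ) * (1/p - 1) + k)) ^ p := by
            rw [measure_IkM hμ hkM]
            simp [ENNReal.toReal_pow]
        _ = _ := branch2_eq hp0 hC M k
  -- sum the bounds
  have hsum : ∑ q ∈ idxS M, bnd q
      ≤ C ^ p / ((2:ℝ) ^ p - 1)
        + (1 / (2 * ((2:ℝ) ^ p - 1) * (1 - (2:ℝ) ^ ((1 + α) * p - 1))))
          * (C ^ p * (2:ℝ) ^ ((M : ℝ) * (1 - p)) * (m : ℝ) ^ (-(α * p))) := by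
    rw [idxS, Finset.sum_sigma]
    rw [Finset.sum_range_succ]
    have hlast : ∑ k ∈ Finset.range (min M M), bnd ⟨M, k⟩ ≤ C ^ p / ((2:ℝ) ^ p - 1) := by
      rw [min_self]
      have : ∀ k ∈ Finset.range M, bnd ⟨M, k⟩
          = C ^ p * ((2:ℝ) ^ (-p)) ^ M * ((2:ℝ) ^ p) ^ k := fun k _ => by simp [hbnd]
      rw [Finset.sum_congr rfl this, ← Finset.mul_sum]
      calc C ^ p * ((2:ℝ) ^ (-p)) ^ M * ∑ k ∈ Finset.range M, ((2:ℝ) ^ p) ^ k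
          ≤ C ^ p * ((2:ℝ) ^ (-p)) ^ M * (((2:ℝ) ^ p) ^ M / ((2:ℝ) ^ p - 1)) := by
            apply mul_le_mul_of_nonneg_left (geom_le_of_one_lt hR M) (by positivity)
        _ = C ^ p / ((2:ℝ) ^ p - 1) := by
            rw [div_eq_mul_inv, div_eq_mul_inv, ← mul_assoc, mul_assoc (C ^ p),
              ← mul_pow, two_rpow_mul]
            simp
    have hmain : ∑ l ∈ Finset.range M, ∑ k ∈ Finset.range (min l M), bnd ⟨l, k⟩
        ≤ (1 / (2 * ((2:ℝ) ^ p - 1) * (1 - (2:ℝ) ^ ((1 + α) * p - 1))))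
          * (C ^ p * (2:ℝ) ^ ((M : ℝ) * (1 - p)) * (m : ℝ) ^ (-(α * p))) := by
      set E := (2:ℝ) ^ ((M:ℝ) * (1 - p)) * (m:ℝ) ^ (-(α*p)) with hE
      have hstep : ∀ l ∈ Finset.range M,
          ∑ k ∈ Finset.range (min l M), bnd ⟨l, k⟩
            ≤ (C ^ p * E * (1/2) / ((2:ℝ) ^ p - 1)) * ((2:ℝ) ^ ((1+α)*p - 1)) ^ l := by
        intro l hl
        rw [Finset.mem_range] at hl
        rw [min_eq_left hl.le]
        have : ∀ k ∈ Finset.range l, bnd ⟨l, k⟩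
            = C ^ p * E * (1/2) * ((2:ℝ) ^ (α*p - 1)) ^ l * ((2:ℝ) ^ p) ^ k :=
          fun k _ => by simp [hbnd, hl, hE]
        rw [Finset.sum_congr rfl this, ← Finset.mul_sum]
        calc C ^ p * E * (1/2) * ((2:ℝ) ^ (α*p - 1)) ^ l * ∑ k ∈ Finset.range l, ((2:ℝ) ^ p) ^ k
            ≤ C ^ p * E * (1/2) * ((2:ℝ) ^ (α*p - 1)) ^ l
                * (((2:ℝ) ^ p) ^ l / ((2:ℝ) ^ p - 1)) := by
              apply mul_le_mul_of_nonneg_left (geom_le_of_one_lt hR l) (by positivity)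
          _ = (C ^ p * E * (1/2) / ((2:ℝ) ^ p - 1)) * ((2:ℝ) ^ ((1+α)*p - 1)) ^ l := by
              have hrho : (2:ℝ) ^ ((1+α)*p - 1) = (2:ℝ) ^ p * (2:ℝ) ^ (α*p - 1) := by
                rw [two_rpow_mul]; congr 1; ring
              rw [hrho, mul_pow]
              ring
      calc ∑ l ∈ Finset.range M, ∑ k ∈ Finset.range (min l M), bnd ⟨l, k⟩
          ≤ ∑ l ∈ Finset.range M,
              (C ^ p * E * (1/2) / ((2:ℝ) ^ p - 1)) * ((2:ℝ) ^ ((1+α)*p - 1)) ^ l :=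
            Finset.sum_le_sum hstep
        _ = (C ^ p * E * (1/2) / ((2:ℝ) ^ p - 1))
              * ∑ l ∈ Finset.range M, ((2:ℝ) ^ ((1+α)*p - 1)) ^ l := by
            rw [Finset.mul_sum]
        _ ≤ (C ^ p * E * (1/2) / ((2:ℝ) ^ p - 1)) * (1 / (1 - (2:ℝ) ^ ((1+α)*p - 1))) := by
            apply mul_le_mul_of_nonneg_left (geom_le_of_lt_one hρ0 hρ1 M)
            exact div_nonneg (mul_nonneg (mul_nonneg hCp hE0) (by norm_num)) (by linarith)
        _ = (1 / (2 * ((2:ℝ) ^ p - 1) * (1 - (2:ℝ) ^ ((1 + α) * p - 1)))) * (C ^ p * E) := by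
            field_simp
        _ = _ := by rw [hE]; ring
    calc (∑ l ∈ Finset.range M, ∑ k ∈ Finset.range (min l M), bnd ⟨l, k⟩)
          + ∑ k ∈ Finset.range (min M M), bnd ⟨M, k⟩
        ≤ _ + _ := add_le_add hmain hlast
      _ = _ := by ring
  -- combine
  rw [hsplit, hcompl]
  have := Finset.sum_le_sum hpiece
  linarith [this, hsum, h1]

open scoped Classical in
theorem strong_sum_bound_of_pointwise (α p : ℝ) (hα0 : 0 < α) (hα1 : α < 1)
    (hp0 : 0 < p) (hp1 : p < 1 / (1 + α))
    (μ : Measure DyadicGroup) (hμ : IsDyadicHaar μ) (C : ℝ) :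
    ∃ c : ℝ, ∀ (M : ℕ) (a : DyadicGroup → ℝ),
      (∀ m : ℕ, 2 ^ M < m → ∫ x in IM M, |cesaroMean μ α m a x| ^ p ∂μ ≤ C) →
      (∀ k l : ℕ, k < l → l < M → ∀ x ∈ IklSet k l, ∀ m : ℕ, 2 ^ M < m →
        |cesaroMean μ α m a x| ≤
          C * (2 : ℝ) ^ ((M : ℝ) * (1 / p - 1)) * (2 : ℝ) ^ (α * l + k) / (m : ℝ) ^ α) →
      (∀ k : ℕ, k < M → ∀ x ∈ IkMSet M k, ∀ m : ℕ, 2 ^ M < m →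
        |cesaroMean μ α m a x| ≤ C * (2 : ℝ) ^ ((M : ℝ) * (1 / p - 1) + k)) →
      (∑' m : ℕ, if 2 ^ M < m then
          (∫ x, |cesaroMean μ α m a x| ^ p ∂μ) / (m : ℝ) ^ (2 - (1 + α) * p) else 0) ≤ c := by
  
  have hα1' : (0:ℝ) < 1 + α := by linarith
  have hap : (1 + α) * p < 1 := by
    have h := (lt_div_iff₀ hα1').mp hp1
    linarith
  have hplt1 : p < 1 := by nlinarith
  have hR : (1:ℝ) < (2:ℝ) ^ p :=
    (Real.one_lt_rpow_iff_of_pos two_pos).mpr (Or.inl ⟨one_lt_two, hp0⟩)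
  have hρ0 : (0:ℝ) ≤ (2:ℝ) ^ ((1 + α) * p - 1) := Real.rpow_nonneg (by norm_num) _
  have hρ1 : (2:ℝ) ^ ((1 + α) * p - 1) < 1 :=
    Real.rpow_lt_one_of_one_lt_of_neg one_lt_two (by linarith)
  have hq0 : (1:ℝ) < 2 - (1 + α) * p := by linarith
  have hc40 : (0:ℝ) ≤ 1 / (2 * ((2:ℝ) ^ p - 1) * (1 - (2:ℝ) ^ ((1 + α) * p - 1))) :=
    le_of_lt (by apply div_pos one_pos; apply mul_pos (mul_pos two_pos (by linarith)); linarith)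
  refine ⟨max 0 ((C + C ^ p / ((2:ℝ) ^ p - 1)) * (1 / (2 - (1 + α) * p - 1))
    + (1 / (2 * ((2:ℝ) ^ p - 1) * (1 - (2:ℝ) ^ ((1 + α) * p - 1)))) * C ^ p * (1 / (1 - p))), ?_⟩
  intro M a h1 h2 h3
  have hC : 0 ≤ C := by
    refine le_trans ?_ (h1 (2 ^ M + 1) (Nat.lt_succ_self _))
    exact setIntegral_nonneg (measurableSet_IM M)
      (fun x _ => Real.rpow_nonneg (abs_nonneg _) p)
  have hCp : (0:ℝ) ≤ C ^ p := Real.rpow_nonneg hC p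
  have hT2 : (0:ℝ) ≤ C + C ^ p / ((2:ℝ) ^ p - 1) := by
    have h0 : (0:ℝ) ≤ C ^ p / ((2:ℝ) ^ p - 1) := div_nonneg hCp (by linarith)
    linarith
  have hT3 : (0:ℝ) ≤ (1 / (2 * ((2:ℝ) ^ p - 1) * (1 - (2:ℝ) ^ ((1 + α) * p - 1)))) * C ^ p
      * (2:ℝ) ^ ((M:ℝ) * (1 - p)) :=
    mul_nonneg (mul_nonneg hc40 hCp) (Real.rpow_nonneg (by norm_num) _)
  have hN1 : (1:ℝ) ≤ ((2 ^ M : ℕ) : ℝ) := by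
    exact_mod_cast Nat.one_le_pow M 2 (by norm_num)
  apply tsum_le_of_sum_le' (le_max_left _ _)
  intro u
  rw [← Finset.sum_filter]
  set t := u.filter (fun m => 2 ^ M < m) with ht
  have htmem : ∀ m ∈ t, 2 ^ M < m := fun m hm => (Finset.mem_filter.mp hm).2
  have hper : ∀ m ∈ t, (∫ x, |cesaroMean μ α m a x| ^ p ∂μ) / (m:ℝ) ^ (2 - (1 + α) * p)
      ≤ (C + C ^ p / ((2:ℝ) ^ p - 1)) * (m:ℝ) ^ (-(2 - (1 + α) * p))
        + ((1 / (2 * ((2:ℝ) ^ p - 1) * (1 - (2:ℝ) ^ ((1 + α) * p - 1)))) * C ^ p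
            * (2:ℝ) ^ ((M:ℝ) * (1 - p))) * (m:ℝ) ^ (-(2 - p)) := by
    intro m hm
    have hmM := htmem m hm
    have hm0' : (0:ℝ) < (m:ℝ) := by
      have h0 : 0 < m := lt_of_le_of_lt (Nat.zero_le _) hmM
      exact_mod_cast h0
    have hkey := key_integral_bound α p hα0 hp0 hap μ hμ C hC M a m hmM (h1 m hmM)
      (fun k l hkl hlM x hx => h2 k l hkl hlM x hx m hmM)
      (fun k hkM x hx => h3 k hkM x hx m hmM)
    have hpow : (0:ℝ) < (m:ℝ) ^ (2 - (1 + α) * p) := Real.rpow_pos_of_pos hm0' _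
    have hmm : (m:ℝ) ^ (-(α*p)) * (m:ℝ) ^ (-(2 - (1 + α) * p)) = (m:ℝ) ^ (-(2 - p)) := by
      rw [← Real.rpow_add hm0']; congr 1; ring
    calc (∫ x, |cesaroMean μ α m a x| ^ p ∂μ) / (m:ℝ) ^ (2 - (1 + α) * p)
        ≤ (C + C ^ p / ((2:ℝ) ^ p - 1)
            + (1 / (2 * ((2:ℝ) ^ p - 1) * (1 - (2:ℝ) ^ ((1 + α) * p - 1))))
              * (C ^ p * (2:ℝ) ^ ((M : ℝ) * (1 - p)) * (m : ℝ) ^ (-(α * p))))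
            / (m:ℝ) ^ (2 - (1 + α) * p) := by
          gcongr
      _ = _ := by
          rw [div_eq_mul_inv, ← Real.rpow_neg hm0'.le, add_mul]
          congr 1
          rw [← hmm]
          ring
  calc ∑ m ∈ t, (∫ x, |cesaroMean μ α m a x| ^ p ∂μ) / (m:ℝ) ^ (2 - (1 + α) * p)
      ≤ ∑ m ∈ t, ((C + C ^ p / ((2:ℝ) ^ p - 1)) * (m:ℝ) ^ (-(2 - (1 + α) * p))
        + ((1 / (2 * ((2:ℝ) ^ p - 1) * (1 - (2:ℝ) ^ ((1 + α) * p - 1)))) * C ^ p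
            * (2:ℝ) ^ ((M:ℝ) * (1 - p))) * (m:ℝ) ^ (-(2 - p))) := Finset.sum_le_sum hper
    _ = (C + C ^ p / ((2:ℝ) ^ p - 1)) * ∑ m ∈ t, (m:ℝ) ^ (-(2 - (1 + α) * p))
        + ((1 / (2 * ((2:ℝ) ^ p - 1) * (1 - (2:ℝ) ^ ((1 + α) * p - 1)))) * C ^ p
            * (2:ℝ) ^ ((M:ℝ) * (1 - p))) * ∑ m ∈ t, (m:ℝ) ^ (-(2 - p)) := by
        rw [Finset.sum_add_distrib, Finset.mul_sum, Finset.mul_sum]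
    _ ≤ (C + C ^ p / ((2:ℝ) ^ p - 1)) * (1 / (2 - (1 + α) * p - 1))
        + (1 / (2 * ((2:ℝ) ^ p - 1) * (1 - (2:ℝ) ^ ((1 + α) * p - 1)))) * C ^ p
            * (1 / (1 - p)) := by
        have ht1 : ∑ m ∈ t, (m:ℝ) ^ (-(2 - (1 + α) * p)) ≤ 1 / (2 - (1 + α) * p - 1) := by
          refine le_trans (tail_sum hq0 (Nat.one_le_pow M 2 (by norm_num)) t htmem) ?_
          have hA : ((2 ^ M : ℕ) : ℝ) ^ (1 - (2 - (1 + α) * p)) ≤ 1 :=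
            Real.rpow_le_one_of_one_le_of_nonpos hN1 (by linarith)
          gcongr
        have ht2 : ∑ m ∈ t, (m:ℝ) ^ (-(2 - p)) ≤ ((2 ^ M : ℕ) : ℝ) ^ (p - 1) / (1 - p) := by
          refine le_trans (tail_sum (by linarith : (1:ℝ) < 2 - p)
            (Nat.one_le_pow M 2 (by norm_num)) t htmem) ?_
          rw [show (1:ℝ) - (2 - p) = p - 1 by ring, show (2:ℝ) - p - 1 = 1 - p by ring]
        have hcast : ((2 ^ M : ℕ) : ℝ) ^ (p - 1) = (2:ℝ) ^ ((M:ℝ) * (p - 1)) := by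
          rw [Nat.cast_pow, Nat.cast_ofNat, ← Real.rpow_natCast 2 M, two_rpow_rpow]
        have hone : (2:ℝ) ^ ((M:ℝ) * (1 - p)) * (2:ℝ) ^ ((M:ℝ) * (p - 1)) = 1 := by
          rw [two_rpow_mul, show (M:ℝ) * (1 - p) + (M:ℝ) * (p - 1) = 0 by ring,
            Real.rpow_zero]
        have hb1 := mul_le_mul_of_nonneg_left ht1 hT2
        have hb2 := mul_le_mul_of_nonneg_left ht2 hT3
        have hb2' : ((1 / (2 * ((2:ℝ) ^ p - 1) * (1 - (2:ℝ) ^ ((1 + α) * p - 1)))) * C ^ p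
            * (2:ℝ) ^ ((M:ℝ) * (1 - p))) * (((2 ^ M : ℕ) : ℝ) ^ (p - 1) / (1 - p))
            = (1 / (2 * ((2:ℝ) ^ p - 1) * (1 - (2:ℝ) ^ ((1 + α) * p - 1)))) * C ^ p
              * (1 / (1 - p)) := by
          rw [hcast]
          calc _ = (1 / (2 * ((2:ℝ) ^ p - 1) * (1 - (2:ℝ) ^ ((1 + α) * p - 1)))) * C ^ p
              * (((2:ℝ) ^ ((M:ℝ) * (1 - p)) * (2:ℝ) ^ ((M:ℝ) * (p - 1))) * (1 / (1 - p))) := by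
                ring
            _ = _ := by rw [hone]; ring
        linarith [hb1, hb2' ▸ hb2]
    _ ≤ _ := le_max_right _ _
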